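/- Fix a fixed-design Cox partial likelihood with score U and information matrix J, with covariates bounded by |z_i^j| ≤ K₁ for all i, j. Let β₀ ∈ ℝ^p with support T₀ := {j : β₀ⱼ ≠ 0} of cardinality S ≥ 1, let q ≥ 1, and let β̂ ∈ ℝ^p and γ ≥ 0 satisfy ‖U(β₀)‖_∞ ≤ γ, ‖U(β̂)‖_∞ ≤ γ, and ‖β̂‖₁ ≤ ‖β₀‖₁. If the weak cone invertibility factor satisfies F_q(T₀; J(β₀)) > 0, then ‖β̂ − β₀‖_q ≤ 4 S^{1/q} γ exp(4K₁‖β₀‖₁) / F_q(T₀; J(β₀)). -/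

import Mathlib

open Matrix Finset

noncomputable def l1 {p : ℕ} (h : Fin p → ℝ) : ℝ := ∑ j, |h j|
noncomputable def l2 {p : ℕ} (h : Fin p → ℝ) : ℝ := Real.sqrt (∑ j, (h j) ^ 2)
noncomputable def lqNorm {p : ℕ} (q : ℝ) (h : Fin p → ℝ) : ℝ := (∑ j, |h j| ^ q) ^ (1 / q)
noncomputable def linf {p : ℕ} (h : Fin p → ℝ) : ℝ := ⨆ j, |h j|
def restr {p : ℕ} (T : Finset (Fin p)) (h : Fin p → ℝ) : Fin p → ℝ :=
  fun j => if j ∈ T then h j else 0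
def coneC {p : ℕ} (T : Finset (Fin p)) (h : Fin p → ℝ) : Prop :=
  l1 (restr Tᶜ h) ≤ l1 (restr T h)
noncomputable def quad {p : ℕ} (M : Matrix (Fin p) (Fin p) ℝ) (h : Fin p → ℝ) : ℝ :=
  h ⬝ᵥ M.mulVec h

/-- `S⁰_i(β) = Σ_{k ∈ R_i} exp(z_kᵀβ)` for the fixed-design Cox partial likelihood. -/
noncomputable def coxS0 {n p : ℕ} (z : Fin n → Fin p → ℝ) (R : Fin n → Finset (Fin n))
    (i : Fin n) (β : Fin p → ℝ) : ℝ :=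
  ∑ k ∈ R i, Real.exp (z k ⬝ᵥ β)

/-- The score `U(β) = (1/n) Σ_{i ∈ D} (z_i − S¹_i(β)/S⁰_i(β))`. -/
noncomputable def coxU {n p : ℕ} (z : Fin n → Fin p → ℝ) (D : Finset (Fin n))
    (R : Fin n → Finset (Fin n)) (β : Fin p → ℝ) : Fin p → ℝ :=
  fun j => (n : ℝ)⁻¹ *
    ∑ i ∈ D, (z i j - (∑ k ∈ R i, Real.exp (z k ⬝ᵥ β) * z k j) / coxS0 z R i β)

/-- The information matrix
`J(β) = (1/n) Σ_{i ∈ D} (S²_i(β)/S⁰_i(β) − (S¹_i(β)/S⁰_i(β))(S¹_i(β)/S⁰_i(β))ᵀ)`. -/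
noncomputable def coxJ {n p : ℕ} (z : Fin n → Fin p → ℝ) (D : Finset (Fin n))
    (R : Fin n → Finset (Fin n)) (β : Fin p → ℝ) : Matrix (Fin p) (Fin p) ℝ :=
  fun a b => (n : ℝ)⁻¹ *
    ∑ i ∈ D,
      ((∑ k ∈ R i, Real.exp (z k ⬝ᵥ β) * z k a * z k b) / coxS0 z R i β -
        ((∑ k ∈ R i, Real.exp (z k ⬝ᵥ β) * z k a) / coxS0 z R i β) *
          ((∑ k ∈ R i, Real.exp (z k ⬝ᵥ β) * z k b) / coxS0 z R i β))

/-- Compatibility factor `κ(T₀; M) = inf_{0 ≠ h ∈ C_{T₀}} √|T₀| (hᵀMh)^{1/2} / ‖h_{T₀}‖₁`. -/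
noncomputable def kappa {p : ℕ} (T0 : Finset (Fin p)) (M : Matrix (Fin p) (Fin p) ℝ) : ℝ :=
  sInf {x | ∃ h : Fin p → ℝ, h ≠ 0 ∧ coneC T0 h ∧
    x = Real.sqrt (T0.card) * Real.sqrt (quad M h) / l1 (restr T0 h)}

/-- Restricted eigenvalue `RE(T₀; M) = inf_{0 ≠ h ∈ C_{T₀}} (hᵀMh)^{1/2} / ‖h‖₂`. -/
noncomputable def RE {p : ℕ} (T0 : Finset (Fin p)) (M : Matrix (Fin p) (Fin p) ℝ) : ℝ :=
  sInf {x | ∃ h : Fin p → ℝ, h ≠ 0 ∧ coneC T0 h ∧ x = Real.sqrt (quad M h) / l2 h}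

/-- Weak cone invertibility factor
`F_q(T₀; M) = inf_{0 ≠ h ∈ C_{T₀}} |T₀|^{1/q} (hᵀMh) / (‖h_{T₀}‖₁ ‖h‖_q)`. -/
noncomputable def Fq {p : ℕ} (q : ℝ) (T0 : Finset (Fin p)) (M : Matrix (Fin p) (Fin p) ℝ) : ℝ :=
  sInf {x | ∃ h : Fin p → ℝ, h ≠ 0 ∧ coneC T0 h ∧
    x = (T0.card : ℝ) ^ (1 / q) * quad M h / (l1 (restr T0 h) * lqNorm q h)}

-- generic inner identity: ∑_a h a * Q a = ∑_k e_k ⟨v_k, h⟩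
lemma hQ_lem {p : ℕ} {ι : Type*} (Rs : Finset ι) (e : ι → ℝ) (v : ι → Fin p → ℝ)
    (h : Fin p → ℝ) :
    ∑ a, h a * (∑ k ∈ Rs, e k * v k a) = ∑ k ∈ Rs, e k * (v k ⬝ᵥ h) := by
  simp only [Finset.mul_sum]
  rw [Finset.sum_comm]
  refine Finset.sum_congr rfl fun k _ => ?_
  rw [dotProduct, Finset.mul_sum]
  exact Finset.sum_congr rfl fun a _ => by ring

lemma hP_lem {p : ℕ} {ι : Type*} (Rs : Finset ι) (e : ι → ℝ) (v : ι → Fin p → ℝ)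
    (h : Fin p → ℝ) :
    ∑ a, h a * ∑ b, (∑ k ∈ Rs, e k * v k a * v k b) * h b
      = ∑ k ∈ Rs, e k * (v k ⬝ᵥ h)^2 := by
  have inner : ∀ a, ∑ b, (∑ k ∈ Rs, e k * v k a * v k b) * h b
      = ∑ k ∈ Rs, (e k * (v k ⬝ᵥ h)) * v k a := by
    intro a
    simp only [Finset.sum_mul]
    rw [Finset.sum_comm]
    refine Finset.sum_congr rfl fun k _ => ?_
    rw [dotProduct, Finset.mul_sum, Finset.sum_mul]
    exact Finset.sum_congr rfl fun b _ => by ring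
  calc ∑ a, h a * ∑ b, (∑ k ∈ Rs, e k * v k a * v k b) * h b
      = ∑ a, h a * ∑ k ∈ Rs, (e k * (v k ⬝ᵥ h)) * v k a := by
        exact Finset.sum_congr rfl fun a _ => by rw [inner a]
    _ = ∑ k ∈ Rs, (e k * (v k ⬝ᵥ h)) * (v k ⬝ᵥ h) := hQ_lem Rs _ v h
    _ = ∑ k ∈ Rs, e k * (v k ⬝ᵥ h)^2 := Finset.sum_congr rfl fun k _ => by ring

lemma quad_inner {p : ℕ} {ι : Type*} (Rs : Finset ι) (e : ι → ℝ) (S : ℝ)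
    (v : ι → Fin p → ℝ) (h : Fin p → ℝ) :
    ∑ a, h a * ∑ b, ((∑ k ∈ Rs, e k * v k a * v k b) / S
        - ((∑ k ∈ Rs, e k * v k a) / S) * ((∑ k ∈ Rs, e k * v k b) / S)) * h b
      = (∑ k ∈ Rs, e k * (v k ⬝ᵥ h)^2) / S
        - ((∑ k ∈ Rs, e k * (v k ⬝ᵥ h)) / S)^2 := by
  have inner : ∀ a, ∑ b, ((∑ k ∈ Rs, e k * v k a * v k b) / S
        - ((∑ k ∈ Rs, e k * v k a) / S) * ((∑ k ∈ Rs, e k * v k b) / S)) * h b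
      = (∑ b, (∑ k ∈ Rs, e k * v k a * v k b) * h b) / S
        - ((∑ k ∈ Rs, e k * v k a) / S) * ((∑ b, h b * (∑ k ∈ Rs, e k * v k b)) / S) := by
    intro a
    have e1 : ∀ b, ((∑ k ∈ Rs, e k * v k a * v k b) / S
        - ((∑ k ∈ Rs, e k * v k a) / S) * ((∑ k ∈ Rs, e k * v k b) / S)) * h b
      = ((∑ k ∈ Rs, e k * v k a * v k b) * h b) / S
        - ((∑ k ∈ Rs, e k * v k a) / S) * ((h b * (∑ k ∈ Rs, e k * v k b)) / S) :=
      fun b => by ring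
    simp only [e1]
    rw [Finset.sum_sub_distrib, ← Finset.sum_div, ← Finset.mul_sum, ← Finset.sum_div]
  calc ∑ a, h a * ∑ b, ((∑ k ∈ Rs, e k * v k a * v k b) / S
        - ((∑ k ∈ Rs, e k * v k a) / S) * ((∑ k ∈ Rs, e k * v k b) / S)) * h b
      = ∑ a, ((h a * ∑ b, (∑ k ∈ Rs, e k * v k a * v k b) * h b) / S
        - (h a * (∑ k ∈ Rs, e k * v k a)) / S
          * ((∑ b, h b * (∑ k ∈ Rs, e k * v k b)) / S)) := by
        refine Finset.sum_congr rfl fun a _ => ?_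
        rw [inner a]; ring
    _ = (∑ a, h a * ∑ b, (∑ k ∈ Rs, e k * v k a * v k b) * h b) / S
        - ((∑ a, h a * (∑ k ∈ Rs, e k * v k a)) / S)
          * ((∑ b, h b * (∑ k ∈ Rs, e k * v k b)) / S) := by
        rw [Finset.sum_sub_distrib, ← Finset.sum_div, ← Finset.sum_mul, ← Finset.sum_div]
    _ = _ := by
        rw [hP_lem, hQ_lem]
        ring

lemma pull_swap {α γ : Type*} [Fintype α] (s : Finset γ) (c : ℝ) (u : α → ℝ)
    (Y : γ → α → α → ℝ) :
    ∑ a, u a * ∑ b, ((c * ∑ i ∈ s, Y i a b) * u b)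
      = c * ∑ i ∈ s, ∑ a, u a * ∑ b, (Y i a b * u b) := by
  calc ∑ a, u a * ∑ b, ((c * ∑ i ∈ s, Y i a b) * u b)
      = ∑ a, ∑ b, ∑ i ∈ s, c * (u a * (Y i a b * u b)) := by
        refine Finset.sum_congr rfl fun a _ => ?_
        rw [Finset.mul_sum]
        refine Finset.sum_congr rfl fun b _ => ?_
        rw [Finset.mul_sum, Finset.sum_mul, Finset.mul_sum]
        exact Finset.sum_congr rfl fun i _ => by ring
    _ = ∑ i ∈ s, ∑ a, ∑ b, c * (u a * (Y i a b * u b)) := by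
        have h1 : ∀ a : α, ∑ b : α, ∑ i ∈ s, c * (u a * (Y i a b * u b))
            = ∑ i ∈ s, ∑ b : α, c * (u a * (Y i a b * u b)) := fun a => Finset.sum_comm
        simp only [h1]
        exact Finset.sum_comm
    _ = c * ∑ i ∈ s, ∑ a, u a * ∑ b, (Y i a b * u b) := by
        rw [Finset.mul_sum]
        refine Finset.sum_congr rfl fun i _ => ?_
        rw [Finset.mul_sum]
        refine Finset.sum_congr rfl fun a _ => ?_
        rw [Finset.mul_sum, Finset.mul_sum]

lemma quad_coxJ {n p : ℕ} (z : Fin n → Fin p → ℝ) (D : Finset (Fin n))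
    (R : Fin n → Finset (Fin n)) (β h : Fin p → ℝ) :
    quad (coxJ z D R β) h = (n:ℝ)⁻¹ * ∑ i ∈ D,
      ((∑ k ∈ R i, Real.exp (z k ⬝ᵥ β) * (z k ⬝ᵥ h)^2) / coxS0 z R i β
        - ((∑ k ∈ R i, Real.exp (z k ⬝ᵥ β) * (z k ⬝ᵥ h)) / coxS0 z R i β)^2) := by
  unfold quad coxJ
  show ∑ a, h a * ∑ b, (((n:ℝ)⁻¹ *
      ∑ i ∈ D, ((∑ k ∈ R i, Real.exp (z k ⬝ᵥ β) * z k a * z k b) / coxS0 z R i β -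
        (∑ k ∈ R i, Real.exp (z k ⬝ᵥ β) * z k a) / coxS0 z R i β *
          ((∑ k ∈ R i, Real.exp (z k ⬝ᵥ β) * z k b) / coxS0 z R i β))) * h b) = _
  rw [pull_swap D ((n:ℝ)⁻¹) h (fun i a b =>
    (∑ k ∈ R i, Real.exp (z k ⬝ᵥ β) * z k a * z k b) / coxS0 z R i β -
      ((∑ k ∈ R i, Real.exp (z k ⬝ᵥ β) * z k a) / coxS0 z R i β) *
        ((∑ k ∈ R i, Real.exp (z k ⬝ᵥ β) * z k b) / coxS0 z R i β))]
  congr 1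
  exact Finset.sum_congr rfl fun i _ =>
    quad_inner (R i) (fun k => Real.exp (z k ⬝ᵥ β)) (coxS0 z R i β) z h

lemma sum_U_diff {n p : ℕ} (z : Fin n → Fin p → ℝ) (D : Finset (Fin n))
    (R : Fin n → Finset (Fin n)) (β β' h : Fin p → ℝ) :
    ∑ j, h j * (coxU z D R β j - coxU z D R β' j)
      = (n:ℝ)⁻¹ * ∑ i ∈ D,
          ((∑ k ∈ R i, Real.exp (z k ⬝ᵥ β') * (z k ⬝ᵥ h)) / coxS0 z R i β'
            - (∑ k ∈ R i, Real.exp (z k ⬝ᵥ β) * (z k ⬝ᵥ h)) / coxS0 z R i β) := by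
  unfold coxU
  have e1 : ∀ j, h j * (((n:ℝ)⁻¹ * ∑ i ∈ D,
        (z i j - (∑ k ∈ R i, Real.exp (z k ⬝ᵥ β) * z k j) / coxS0 z R i β))
      - ((n:ℝ)⁻¹ * ∑ i ∈ D,
        (z i j - (∑ k ∈ R i, Real.exp (z k ⬝ᵥ β') * z k j) / coxS0 z R i β')))
      = (n:ℝ)⁻¹ * ∑ i ∈ D,
          (h j * ((∑ k ∈ R i, Real.exp (z k ⬝ᵥ β') * z k j) / coxS0 z R i β')
            - h j * ((∑ k ∈ R i, Real.exp (z k ⬝ᵥ β) * z k j) / coxS0 z R i β)) := by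
    intro j
    have e2 : ∀ A B : ℝ, h j * ((n:ℝ)⁻¹ * A - (n:ℝ)⁻¹ * B) = (n:ℝ)⁻¹ * (h j * (A - B)) :=
      fun A B => by ring
    rw [e2, ← Finset.sum_sub_distrib, Finset.mul_sum]
    congr 1
    exact Finset.sum_congr rfl fun i _ => by ring
  simp only [e1]
  rw [← Finset.mul_sum]
  congr 1
  rw [Finset.sum_comm]
  refine Finset.sum_congr rfl fun i _ => ?_
  rw [Finset.sum_sub_distrib]
  have e3 : ∀ c : Fin p → ℝ, ∑ j, h j * ((∑ k ∈ R i, Real.exp (z k ⬝ᵥ c) * z k j) / coxS0 z R i c)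
      = (∑ k ∈ R i, Real.exp (z k ⬝ᵥ c) * (z k ⬝ᵥ h)) / coxS0 z R i c := by
    intro c
    calc ∑ j, h j * ((∑ k ∈ R i, Real.exp (z k ⬝ᵥ c) * z k j) / coxS0 z R i c)
        = (∑ j, h j * (∑ k ∈ R i, Real.exp (z k ⬝ᵥ c) * z k j)) / coxS0 z R i c := by
          rw [Finset.sum_div]
          exact Finset.sum_congr rfl fun j _ => (mul_div_assoc _ _ _).symm
      _ = _ := by rw [hQ_lem]
  rw [e3, e3]



lemma cox_key {ι : Type*} (Rs : Finset ι) (hne : Rs.Nonempty)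
    (a b : ι → ℝ) (δ : ℝ) (hb : ∀ k ∈ Rs, |b k| ≤ δ) :
    Real.exp (-(2*δ)) *
      ((∑ k ∈ Rs, Real.exp (a k) * (b k)^2) / (∑ k ∈ Rs, Real.exp (a k))
        - ((∑ k ∈ Rs, Real.exp (a k) * b k) / (∑ k ∈ Rs, Real.exp (a k)))^2)
    ≤ (∑ k ∈ Rs, Real.exp (a k + b k) * b k) / (∑ k ∈ Rs, Real.exp (a k + b k))
      - (∑ k ∈ Rs, Real.exp (a k) * b k) / (∑ k ∈ Rs, Real.exp (a k)) := by
  obtain ⟨k₀, hk₀⟩ := hne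
  have hδ0 : 0 ≤ δ := le_trans (abs_nonneg _) (hb k₀ hk₀)
  set B : ℝ → ℝ := fun t => ∑ k ∈ Rs, Real.exp (a k + t * b k) with hB
  set A : ℝ → ℝ := fun t => ∑ k ∈ Rs, Real.exp (a k + t * b k) * b k with hA
  set M : ℝ → ℝ := fun t => ∑ k ∈ Rs, Real.exp (a k + t * b k) * (b k)^2 with hM
  have hBpos : ∀ t, 0 < B t := fun t => Finset.sum_pos (fun k _ => Real.exp_pos _) ⟨k₀, hk₀⟩
  set φ : ℝ → ℝ := fun t => A t / B t with hφ
  set V : ℝ → ℝ := fun t => M t / B t - (φ t)^2 with hV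
  -- derivatives
  have hBd : ∀ t, HasDerivAt B (A t) t := by
    intro t
    apply HasDerivAt.fun_sum
    intro k _
    have h1 : HasDerivAt (fun t : ℝ => a k + t * b k) (b k) t := by
      simpa using ((hasDerivAt_id t).mul_const (b k)).const_add (a k)
    simpa [mul_comm] using h1.exp
  have hAd : ∀ t, HasDerivAt A (M t) t := by
    intro t
    apply HasDerivAt.fun_sum
    intro k _
    have h1 : HasDerivAt (fun t : ℝ => a k + t * b k) (b k) t := by
      simpa using ((hasDerivAt_id t).mul_const (b k)).const_add (a k)
    have := h1.exp.mul_const (b k)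
    convert this using 1
    · rfl
    · ring
  have hφd : ∀ t, HasDerivAt φ (V t) t := by
    intro t
    have h := (hAd t).div (hBd t) (hBpos t).ne'
    have hBne := (hBpos t).ne'
    have heq : V t = (M t * B t - A t * A t) / B t ^ 2 := by
      show M t / B t - (A t / B t) ^ 2 = _
      field_simp
    rw [hφ, heq]
    exact h
  -- variance form
  have hvar : ∀ t c, ∑ k ∈ Rs, (Real.exp (a k + t * b k) / B t) * (b k - c)^2
      = M t / B t - 2*c*(A t / B t) + c^2 := by
    intro t c
    have hB' := (hBpos t).ne'
    have expand : ∑ k ∈ Rs, Real.exp (a k + t * b k) * (b k - c)^2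
        = M t - 2*c*A t + c^2 * B t := by
      rw [hM, hA, hB, Finset.mul_sum, Finset.mul_sum, ← Finset.sum_sub_distrib,
        ← Finset.sum_add_distrib]
      exact Finset.sum_congr rfl fun k _ => by ring
    calc ∑ k ∈ Rs, (Real.exp (a k + t * b k) / B t) * (b k - c)^2
        = (∑ k ∈ Rs, Real.exp (a k + t * b k) * (b k - c)^2) / B t := by
          rw [Finset.sum_div]
          exact Finset.sum_congr rfl fun k _ => (div_mul_eq_mul_div _ _ _)
      _ = (M t - 2*c*A t + c^2 * B t) / B t := by rw [expand]
      _ = M t / B t - 2*c*(A t / B t) + c^2 := by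
          field_simp
  have hVf : ∀ t, V t = ∑ k ∈ Rs, (Real.exp (a k + t * b k) / B t) * (b k - φ t)^2 := by
    intro t
    rw [hvar t (φ t), hV, hφ]
    ring
  -- lower bound for V on [0,1]
  have hVlb : ∀ t ∈ Set.Icc (0:ℝ) 1, Real.exp (-(2*δ)) * V 0 ≤ V t := by
    rintro t ⟨ht0, ht1⟩
    have step1 : ∀ k ∈ Rs, Real.exp (-(2*δ)) * ((Real.exp (a k + 0 * b k) / B 0) * (b k - φ t)^2)
        ≤ (Real.exp (a k + t * b k) / B t) * (b k - φ t)^2 := by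
      intro k hk
      have hbk := hb k hk
      have h1 : Real.exp (-δ) * Real.exp (a k + 0 * b k) ≤ Real.exp (a k + t * b k) := by
        rw [← Real.exp_add]
        apply Real.exp_le_exp.2
        have : -δ ≤ t * b k := by
          nlinarith [abs_le.1 hbk, abs_nonneg (b k)]
        linarith
      have h2 : B t ≤ Real.exp δ * B 0 := by
        rw [hB, Finset.mul_sum]
        apply Finset.sum_le_sum
        intro j hj
        rw [← Real.exp_add]
        apply Real.exp_le_exp.2
        have hbj := abs_le.1 (hb j hj)
        nlinarith
      have key : Real.exp (-(2*δ)) * (Real.exp (a k + 0 * b k) / B 0)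
          ≤ Real.exp (a k + t * b k) / B t := by
        have hB0 := hBpos 0
        have hBt := hBpos t
        have lhs_eq : Real.exp (-(2*δ)) * (Real.exp (a k + 0 * b k) / B 0)
            = (Real.exp (-δ) * Real.exp (a k + 0 * b k)) / (Real.exp δ * B 0) := by
          have e2 : Real.exp (-(2*δ)) = Real.exp (-δ) / Real.exp δ := by
            rw [← Real.exp_sub]; ring_nf
          rw [e2, div_mul_div_comm]
        rw [lhs_eq]
        apply div_le_div₀ (Real.exp_pos _).le h1 hBt h2
      calc Real.exp (-(2*δ)) * ((Real.exp (a k + 0 * b k) / B 0) * (b k - φ t)^2)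
          = (Real.exp (-(2*δ)) * (Real.exp (a k + 0 * b k) / B 0)) * (b k - φ t)^2 := by ring
        _ ≤ (Real.exp (a k + t * b k) / B t) * (b k - φ t)^2 :=
            mul_le_mul_of_nonneg_right key (sq_nonneg _)
    have s1 : Real.exp (-(2*δ)) * (∑ k ∈ Rs, (Real.exp (a k + 0 * b k) / B 0) * (b k - φ t)^2)
        ≤ V t := by
      rw [hVf t, Finset.mul_sum]
      exact Finset.sum_le_sum step1
    have s2 : V 0 ≤ ∑ k ∈ Rs, (Real.exp (a k + 0 * b k) / B 0) * (b k - φ t)^2 := by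
      rw [hvar 0 (φ t)]
      have : V 0 = M 0 / B 0 - 2 * φ 0 * (A 0 / B 0) + (φ 0)^2 := by
        rw [hV, hφ]; ring
      rw [this]
      have hφ0 : φ 0 = A 0 / B 0 := rfl
      nlinarith [sq_nonneg (φ t - φ 0)]
    calc Real.exp (-(2*δ)) * V 0
        ≤ Real.exp (-(2*δ)) * ∑ k ∈ Rs, (Real.exp (a k + 0 * b k) / B 0) * (b k - φ t)^2 :=
          mul_le_mul_of_nonneg_left s2 (Real.exp_pos _).le
      _ ≤ V t := s1
  -- mean value argument
  set m : ℝ := Real.exp (-(2*δ)) * V 0 with hm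
  have hmono : MonotoneOn (fun t => φ t - m * t) (Set.Icc (0:ℝ) 1) := by
    apply monotoneOn_of_deriv_nonneg (convex_Icc 0 1)
    · have hdiff : Differentiable ℝ φ := fun t => (hφd t).differentiableAt
      exact (hdiff.continuous.sub (continuous_const.mul continuous_id)).continuousOn
    · intro x hx
      exact ((hφd x).sub ((hasDerivAt_id x).const_mul m)).differentiableAt.differentiableWithinAt
    · intro x hx
      rw [interior_Icc] at hx
      have hd : HasDerivAt (fun t => φ t - m * t) (V x - m) x := by
        have := (hφd x).sub ((hasDerivAt_id x).const_mul m)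
        rw [mul_one] at this
        exact this
      rw [hd.deriv]
      have := hVlb x ⟨hx.1.le, hx.2.le⟩
      linarith
  have hmv : m ≤ φ 1 - φ 0 := by
    have h01 : φ 0 - m * 0 ≤ φ 1 - m * 1 :=
      hmono (Set.left_mem_Icc.2 zero_le_one) (Set.right_mem_Icc.2 zero_le_one) zero_le_one
    linarith
  -- conclude
  have e0 : ∀ f : ι → ℝ, (∑ k ∈ Rs, Real.exp (a k + 0 * b k) * f k) = ∑ k ∈ Rs, Real.exp (a k) * f k := by
    intro f; exact Finset.sum_congr rfl fun k _ => by norm_num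
  have hφ1 : φ 1 = (∑ k ∈ Rs, Real.exp (a k + b k) * b k) / (∑ k ∈ Rs, Real.exp (a k + b k)) := by
    show (∑ k ∈ Rs, Real.exp (a k + 1 * b k) * b k) / (∑ k ∈ Rs, Real.exp (a k + 1 * b k)) = _
    congr 1 <;> exact Finset.sum_congr rfl fun k _ => by norm_num
  have hφ0 : φ 0 = (∑ k ∈ Rs, Real.exp (a k) * b k) / (∑ k ∈ Rs, Real.exp (a k)) := by
    show (∑ k ∈ Rs, Real.exp (a k + 0 * b k) * b k) / (∑ k ∈ Rs, Real.exp (a k + 0 * b k)) = _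
    congr 1 <;> exact Finset.sum_congr rfl fun k _ => by norm_num
  have hV0 : V 0 = (∑ k ∈ Rs, Real.exp (a k) * (b k)^2) / (∑ k ∈ Rs, Real.exp (a k))
      - ((∑ k ∈ Rs, Real.exp (a k) * b k) / (∑ k ∈ Rs, Real.exp (a k)))^2 := by
    show M 0 / B 0 - φ 0 ^ 2 = _
    rw [hφ0]
    congr 1
    show (∑ k ∈ Rs, Real.exp (a k + 0 * b k) * b k ^ 2) / (∑ k ∈ Rs, Real.exp (a k + 0 * b k)) = _
    congr 1 <;> exact Finset.sum_congr rfl fun k _ => by norm_num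
  rw [← hV0, ← hφ1, ← hφ0]
  exact hmv

lemma var_nonneg {ι : Type*} (Rs : Finset ι) (hne : Rs.Nonempty) (e b : ι → ℝ)
    (he : ∀ k ∈ Rs, 0 < e k) :
    0 ≤ (∑ k ∈ Rs, e k * (b k)^2) / (∑ k ∈ Rs, e k)
      - ((∑ k ∈ Rs, e k * b k) / (∑ k ∈ Rs, e k))^2 := by
  have hS : 0 < ∑ k ∈ Rs, e k := Finset.sum_pos he hne
  have cs : (∑ k ∈ Rs, e k * b k)^2 ≤ (∑ k ∈ Rs, e k) * (∑ k ∈ Rs, e k * (b k)^2) := by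
    have h1 := Finset.sum_mul_sq_le_sq_mul_sq Rs (fun k => Real.sqrt (e k))
      (fun k => Real.sqrt (e k) * b k)
    have e1 : ∀ k ∈ Rs, Real.sqrt (e k) * (Real.sqrt (e k) * b k) = e k * b k := fun k hk => by
      rw [← mul_assoc, Real.mul_self_sqrt (he k hk).le]
    have e2 : ∀ k ∈ Rs, Real.sqrt (e k) ^ 2 = e k := fun k hk => Real.sq_sqrt (he k hk).le
    have e3 : ∀ k ∈ Rs, (Real.sqrt (e k) * b k) ^ 2 = e k * b k ^ 2 := fun k hk => by
      rw [mul_pow, Real.sq_sqrt (he k hk).le]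
    rw [Finset.sum_congr rfl e1, Finset.sum_congr rfl e2, Finset.sum_congr rfl e3] at h1
    exact h1
  rw [sub_nonneg, div_pow, div_le_div_iff₀ (by positivity) hS]
  nlinarith [hS, cs]

lemma stepC {n p : ℕ} (z : Fin n → Fin p → ℝ) (D : Finset (Fin n))
    (R : Fin n → Finset (Fin n)) (hR : ∀ i ∈ D, (R i).Nonempty)
    (β h : Fin p → ℝ) (δ : ℝ) (hδ : ∀ k : Fin n, |z k ⬝ᵥ h| ≤ δ) :
    Real.exp (-(2*δ)) * quad (coxJ z D R β) h
      ≤ ∑ j, h j * (coxU z D R β j - coxU z D R (β + h) j) := by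
  rw [quad_coxJ, sum_U_diff]
  have hn : (0:ℝ) ≤ (n:ℝ)⁻¹ := by positivity
  have key : ∀ i ∈ D,
      Real.exp (-(2*δ)) * ((∑ k ∈ R i, Real.exp (z k ⬝ᵥ β) * (z k ⬝ᵥ h)^2) / coxS0 z R i β
        - ((∑ k ∈ R i, Real.exp (z k ⬝ᵥ β) * (z k ⬝ᵥ h)) / coxS0 z R i β)^2)
      ≤ (∑ k ∈ R i, Real.exp (z k ⬝ᵥ (β + h)) * (z k ⬝ᵥ h)) / coxS0 z R i (β + h)
        - (∑ k ∈ R i, Real.exp (z k ⬝ᵥ β) * (z k ⬝ᵥ h)) / coxS0 z R i β := by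
    intro i hi
    have hck := cox_key (R i) (hR i hi) (fun k => z k ⬝ᵥ β) (fun k => z k ⬝ᵥ h) δ
      (fun k _ => hδ k)
    unfold coxS0
    simp only [dotProduct_add]
    simpa using hck
  calc Real.exp (-(2*δ)) * ((n:ℝ)⁻¹ * ∑ i ∈ D,
        ((∑ k ∈ R i, Real.exp (z k ⬝ᵥ β) * (z k ⬝ᵥ h)^2) / coxS0 z R i β
          - ((∑ k ∈ R i, Real.exp (z k ⬝ᵥ β) * (z k ⬝ᵥ h)) / coxS0 z R i β)^2))
      = (n:ℝ)⁻¹ * ∑ i ∈ D, Real.exp (-(2*δ)) *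
        ((∑ k ∈ R i, Real.exp (z k ⬝ᵥ β) * (z k ⬝ᵥ h)^2) / coxS0 z R i β
          - ((∑ k ∈ R i, Real.exp (z k ⬝ᵥ β) * (z k ⬝ᵥ h)) / coxS0 z R i β)^2) := by
        simp only [Finset.mul_sum]
        exact Finset.sum_congr rfl fun i _ => by ring
    _ ≤ (n:ℝ)⁻¹ * ∑ i ∈ D,
        ((∑ k ∈ R i, Real.exp (z k ⬝ᵥ (β + h)) * (z k ⬝ᵥ h)) / coxS0 z R i (β + h)
          - (∑ k ∈ R i, Real.exp (z k ⬝ᵥ β) * (z k ⬝ᵥ h)) / coxS0 z R i β) :=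
        mul_le_mul_of_nonneg_left (Finset.sum_le_sum key) hn

/-- `l_q` bound via the weak cone invertibility factor. -/
theorem stmt10 {n p : ℕ} (z : Fin n → Fin p → ℝ) (D : Finset (Fin n))
    (R : Fin n → Finset (Fin n)) (hR : ∀ i ∈ D, (R i).Nonempty)
    (K₁ : ℝ) (hz : ∀ i j, |z i j| ≤ K₁)
    (β₀ : Fin p → ℝ) (T0 : Finset (Fin p)) (hT0 : ∀ j, j ∈ T0 ↔ β₀ j ≠ 0)
    (S : ℕ) (hS : T0.card = S) (hS1 : 1 ≤ S) (q : ℝ) (hq : 1 ≤ q)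
    (βhat : Fin p → ℝ) (γ : ℝ) (hγ : 0 ≤ γ)
    (hU0 : linf (coxU z D R β₀) ≤ γ) (hUhat : linf (coxU z D R βhat) ≤ γ)
    (hl1 : l1 βhat ≤ l1 β₀)
    (hFq : 0 < Fq q T0 (coxJ z D R β₀)) :
    lqNorm q (βhat - β₀) ≤
      4 * (S : ℝ) ^ (1 / q) * γ * Real.exp (4 * K₁ * l1 β₀) / Fq q T0 (coxJ z D R β₀) := by
  classical
  set J0 := coxJ z D R β₀ with hJ0
  set F := Fq q T0 J0 with hFdef
  set h : Fin p → ℝ := βhat - β₀ with hh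
  have hq0 : (0:ℝ) < q := lt_of_lt_of_le one_pos hq
  have hβh : β₀ + h = βhat := by funext j; simp [hh]
  by_cases hz0 : h = 0
  · rw [hz0]
    have hlq0 : lqNorm q (0 : Fin p → ℝ) = 0 := by
      simp [lqNorm, Real.zero_rpow (ne_of_gt hq0),
        Real.zero_rpow (inv_ne_zero (ne_of_gt hq0))]
    rw [hlq0]
    apply div_nonneg _ hFq.le
    have : (0:ℝ) ≤ (S : ℝ) ^ ((1:ℝ)/q) := Real.rpow_nonneg (Nat.cast_nonneg _) _
    positivity
  obtain ⟨j₀, hj₀⟩ : ∃ j, h j ≠ 0 := by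
    by_contra hc; push_neg at hc; exact hz0 (funext hc)
  -- basic l1 facts
  have l1nn : ∀ g : Fin p → ℝ, 0 ≤ l1 g := fun g =>
    Finset.sum_nonneg fun j _ => abs_nonneg _
  have l1r : ∀ (T : Finset (Fin p)) (g : Fin p → ℝ), l1 (restr T g) = ∑ j ∈ T, |g j| := by
    intro T g
    simp [l1, restr, apply_ite abs, Finset.sum_ite_mem]
  have hβ₀T : ∀ j ∈ T0ᶜ, β₀ j = 0 := fun j hj => by
    by_contra hne; exact (Finset.mem_compl.1 hj) ((hT0 j).2 hne)
  have hsum0 : ∑ j ∈ T0ᶜ, |β₀ j| = 0 :=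
    Finset.sum_eq_zero fun j hj => by rw [hβ₀T j hj, abs_zero]
  have hsplit : ∀ g : Fin p → ℝ, l1 g = ∑ j ∈ T0, |g j| + ∑ j ∈ T0ᶜ, |g j| := fun g =>
    (Finset.sum_add_sum_compl T0 _).symm
  have habs1 : ∀ j, |β₀ j| - |h j| ≤ |βhat j| := by
    intro j
    have h1 : |β₀ j| - |βhat j| ≤ |β₀ j - βhat j| := abs_sub_abs_le_abs_sub _ _
    have h2 : |β₀ j - βhat j| = |h j| := by rw [hh]; rw [← abs_neg]; congr 1; simp
    linarith
  have habs2 : ∀ j ∈ T0ᶜ, |h j| = |βhat j| := by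
    intro j hj
    rw [hh]; simp [hβ₀T j hj]
  have cone : coneC T0 h := by
    unfold coneC
    rw [l1r, l1r]
    have e1 : ∑ j ∈ T0ᶜ, |h j| = ∑ j ∈ T0ᶜ, |βhat j| := Finset.sum_congr rfl habs2
    have e2 : ∑ j ∈ T0, (|β₀ j| - |h j|) ≤ ∑ j ∈ T0, |βhat j| :=
      Finset.sum_le_sum fun j _ => habs1 j
    have e3 : l1 β₀ = ∑ j ∈ T0, |β₀ j| := by rw [hsplit β₀, hsum0, add_zero]
    have e4 := hsplit βhat
    rw [Finset.sum_sub_distrib] at e2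
    linarith
  have coneLs : ∑ j ∈ T0ᶜ, |h j| ≤ ∑ j ∈ T0, |h j| := by
    have hc : l1 (restr T0ᶜ h) ≤ l1 (restr T0 h) := cone
    rwa [l1r, l1r] at hc
  have hl1h2L : l1 h ≤ 2 * l1 (restr T0 h) := by
    rw [l1r]
    have := hsplit h
    linarith
  have hl1h2 : l1 h ≤ 2 * l1 β₀ := by
    have tri : l1 h ≤ l1 βhat + l1 β₀ := by
      unfold l1
      rw [← Finset.sum_add_distrib]
      apply Finset.sum_le_sum
      intro j _
      have hjj : h j = βhat j - β₀ j := rfl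
      rw [hjj]
      exact abs_sub _ _
    linarith
  have hLpos : 0 < l1 (restr T0 h) := by
    rcases lt_or_eq_of_le (l1nn (restr T0 h)) with hlt | heq
    · exact hlt
    · exfalso
      apply hj₀
      have nn2 : 0 ≤ ∑ j ∈ T0ᶜ, |h j| := Finset.sum_nonneg fun j _ => abs_nonneg _
      have hl10 : l1 h = 0 := by
        rw [l1r] at heq
        have := hsplit h
        linarith
      unfold l1 at hl10
      have habs0 : |h j₀| = 0 :=
        (Finset.sum_eq_zero_iff_of_nonneg (fun j _ => abs_nonneg (h j))).1 hl10 j₀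
          (Finset.mem_univ _)
      exact abs_eq_zero.1 habs0
  -- positivity of lq norm
  have hQpos : 0 < lqNorm q h := by
    unfold lqNorm
    apply Real.rpow_pos_of_pos
    exact Finset.sum_pos' (fun j _ => Real.rpow_nonneg (abs_nonneg _) q)
      ⟨j₀, Finset.mem_univ _, Real.rpow_pos_of_pos (abs_pos.2 hj₀) q⟩
  have lqnn : ∀ g : Fin p → ℝ, 0 ≤ lqNorm q g := fun g =>
    Real.rpow_nonneg (Finset.sum_nonneg fun j _ => Real.rpow_nonneg (abs_nonneg _) q) _
  -- quad J0 nonneg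
  have quadnn : ∀ g : Fin p → ℝ, 0 ≤ quad J0 g := by
    intro g
    rw [hJ0, quad_coxJ]
    apply mul_nonneg (by positivity)
    apply Finset.sum_nonneg
    intro i hi
    exact var_nonneg (R i) (hR i hi) _ _ (fun k _ => Real.exp_pos _)
  -- Fq is at most the value at h
  have hbdd : BddBelow {x | ∃ g : Fin p → ℝ, g ≠ 0 ∧ coneC T0 g ∧
      x = (T0.card : ℝ) ^ (1 / q) * quad J0 g / (l1 (restr T0 g) * lqNorm q g)} := by
    refine ⟨0, fun x hx => ?_⟩
    obtain ⟨g, _, _, rfl⟩ := hx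
    apply div_nonneg (mul_nonneg (Real.rpow_nonneg (Nat.cast_nonneg _) _) (quadnn g))
    exact mul_nonneg (l1nn _) (lqnn g)
  have hFle : F ≤ (T0.card : ℝ) ^ (1 / q) * quad J0 h / (l1 (restr T0 h) * lqNorm q h) := by
    rw [hFdef]
    exact csInf_le hbdd ⟨h, hz0, cone, rfl⟩
  -- step D : score bound
  have hUb : ∀ u : Fin p → ℝ, linf u ≤ γ → ∀ j, |u j| ≤ γ := by
    intro u hu j
    refine le_trans ?_ hu
    unfold linf
    exact le_ciSup (f := fun j => |u j|) (Set.Finite.bddAbove (Set.finite_range _)) j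
  have stepD : ∑ j, h j * (coxU z D R β₀ j - coxU z D R βhat j) ≤ 2 * γ * l1 h := by
    calc ∑ j, h j * (coxU z D R β₀ j - coxU z D R βhat j)
        ≤ ∑ j, |h j| * (2*γ) := by
          apply Finset.sum_le_sum
          intro j _
          have h1 := hUb _ hU0 j
          have h2 := hUb _ hUhat j
          have h3 : h j * (coxU z D R β₀ j - coxU z D R βhat j)
              ≤ |h j| * |coxU z D R β₀ j - coxU z D R βhat j| := by
            rw [← abs_mul]
            exact le_abs_self _
          have h4 : |coxU z D R β₀ j - coxU z D R βhat j| ≤ 2*γ := by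
            have := abs_sub (coxU z D R β₀ j) (coxU z D R βhat j)
            linarith
          exact h3.trans (mul_le_mul_of_nonneg_left h4 (abs_nonneg _))
      _ = 2 * γ * l1 h := by
          rw [← Finset.sum_mul]
          unfold l1
          ring
  -- step C : curvature bound
  have hδK : ∀ k : Fin n, |z k ⬝ᵥ h| ≤ 2*K₁*l1 β₀ := by
    intro k
    have hK : 0 ≤ K₁ := le_trans (abs_nonneg _) (hz k j₀)
    have hdp : z k ⬝ᵥ h = ∑ j, z k j * h j := rfl
    calc |z k ⬝ᵥ h| ≤ ∑ j, |z k j * h j| := by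
          rw [hdp]; exact Finset.abs_sum_le_sum_abs _ _
      _ ≤ ∑ j, K₁ * |h j| := Finset.sum_le_sum fun j _ => by
          rw [abs_mul]; exact mul_le_mul_of_nonneg_right (hz k j) (abs_nonneg _)
      _ = K₁ * l1 h := by rw [← Finset.mul_sum]; rfl
      _ ≤ 2*K₁*l1 β₀ := by nlinarith [hl1h2, l1nn β₀]
  have hC := stepC z D R hR β₀ h (2*K₁*l1 β₀) hδK
  rw [hβh] at hC
  rw [← hJ0] at hC
  -- combine
  set L := l1 (restr T0 h) with hLdef
  set Q := lqNorm q h with hQdef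
  set E := Real.exp (4 * K₁ * l1 β₀) with hEdef
  have hVle : quad J0 h ≤ E * (4*γ*L) := by
    have hub : Real.exp (-(2*(2*K₁*l1 β₀))) * quad J0 h ≤ 4*γ*L := by
      have hgl : 2*γ*l1 h ≤ 4*γ*L := by nlinarith [hl1h2L, hγ]
      linarith [hC.trans stepD]
    have hmul := mul_le_mul_of_nonneg_left hub (Real.exp_pos (2*(2*K₁*l1 β₀))).le
    have hid : Real.exp (2*(2*K₁*l1 β₀)) * (Real.exp (-(2*(2*K₁*l1 β₀))) * quad J0 h)
        = quad J0 h := by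
      rw [← mul_assoc, ← Real.exp_add]
      simp
    rw [hid] at hmul
    have hEeq : Real.exp (2*(2*K₁*l1 β₀)) = E := by rw [hEdef]; ring_nf
    rw [hEeq] at hmul
    exact hmul
  have hLQ : 0 < L * Q := mul_pos hLpos hQpos
  have h1 : F * (L * Q) ≤ (S:ℝ)^(1/q) * quad J0 h := by
    rw [hS] at hFle
    exact (le_div_iff₀ hLQ).1 hFle
  have h2 : (S:ℝ)^(1/q) * quad J0 h ≤ (S:ℝ)^(1/q) * (E * (4*γ*L)) :=
    mul_le_mul_of_nonneg_left hVle (Real.rpow_nonneg (Nat.cast_nonneg _) _)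
  have hSnn : (0:ℝ) ≤ (S:ℝ)^(1/q) := Real.rpow_nonneg (Nat.cast_nonneg _) _
  apply (le_div_iff₀ hFq).2
  nlinarith [h1.trans h2, hLpos, hQpos, hSnn]
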